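/- Under the same hypotheses, for every ε ∈ (0,1): ‖x_d u_{x_i x_j}‖_{C([0,T]×H̄)} ≤ ε ‖u‖_{C^{2+α}_s([0,T]×H̄)} + C ε^{-m} ‖u‖_{C([0,T]×H̄)} for all 1 ≤ i,j ≤ d, where m = m(d,α) and C = C(T,R,d,α). -/

import Mathlib

/-- The cycloidal distance. -/
noncomputable def cyc (d : ℕ) (P Q : ℝ × (Fin (d + 1) → ℝ)) : ℝ :=
  (∑ i, |P.2 i - Q.2 i|) /
      (Real.sqrt (P.2 (Fin.last d)) + Real.sqrt (Q.2 (Fin.last d)) +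
        Real.sqrt (∑ i : Fin d, |P.2 i.castSucc - Q.2 i.castSucc|)) +
    Real.sqrt |P.1 - Q.1|

/-- The closed space-time domain `[0,T] × H̄`. -/
def domT (d : ℕ) (T : ℝ) : Set (ℝ × (Fin (d + 1) → ℝ)) :=
  {P | P.1 ∈ Set.Icc 0 T ∧ 0 ≤ P.2 (Fin.last d)}

/-- Sup norm of `f` over a set `S`. -/
noncomputable def supN (d : ℕ) (S : Set (ℝ × (Fin (d + 1) → ℝ)))
    (f : ℝ × (Fin (d + 1) → ℝ) → ℝ) : ℝ :=
  sSup ((fun P => |f P|) '' S)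

/-- Cycloidal Hölder seminorm of exponent `α` of `f` over a set `S`. -/
noncomputable def semiS (d : ℕ) (α : ℝ) (S : Set (ℝ × (Fin (d + 1) → ℝ)))
    (f : ℝ × (Fin (d + 1) → ℝ) → ℝ) : ℝ :=
  sSup ((fun PQ : (ℝ × (Fin (d + 1) → ℝ)) × (ℝ × (Fin (d + 1) → ℝ)) =>
    |f PQ.1 - f PQ.2| / (cyc d PQ.1 PQ.2) ^ α) '' (S ×ˢ S))

/-- Cycloidal Hölder norm `‖f‖_{C^α_s(S)}`. -/
noncomputable def holderS (d : ℕ) (α : ℝ) (S : Set (ℝ × (Fin (d + 1) → ℝ)))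
    (f : ℝ × (Fin (d + 1) → ℝ) → ℝ) : ℝ :=
  supN d S f + semiS d α S f

/-- The Daskalopoulos–Hamilton–Koch norm `‖u‖_{C^{2+α}_s(S)}`, expressed in terms
of `u`, its time derivative `ut`, spatial first derivatives `ux i`, and spatial
second derivatives `uxx i j`. -/
noncomputable def norm2S (d : ℕ) (α : ℝ) (S : Set (ℝ × (Fin (d + 1) → ℝ)))
    (u ut : ℝ × (Fin (d + 1) → ℝ) → ℝ)
    (ux : Fin (d + 1) → ℝ × (Fin (d + 1) → ℝ) → ℝ)
    (uxx : Fin (d + 1) → Fin (d + 1) → ℝ × (Fin (d + 1) → ℝ) → ℝ) : ℝ :=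
  holderS d α S u + holderS d α S ut + (⨆ i, holderS d α S (ux i)) +
    ⨆ i, ⨆ j, holderS d α S (fun P => P.2 (Fin.last d) * uxx i j P)

/-- Finiteness (boundedness) of all the quantities entering `norm2S`. -/
def FinNorm2 (d : ℕ) (α : ℝ) (S : Set (ℝ × (Fin (d + 1) → ℝ)))
    (u ut : ℝ × (Fin (d + 1) → ℝ) → ℝ)
    (ux : Fin (d + 1) → ℝ × (Fin (d + 1) → ℝ) → ℝ)
    (uxx : Fin (d + 1) → Fin (d + 1) → ℝ × (Fin (d + 1) → ℝ) → ℝ) : Prop :=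
  (BddAbove ((fun P => |u P|) '' S) ∧
    BddAbove ((fun PQ : (ℝ × (Fin (d + 1) → ℝ)) × (ℝ × (Fin (d + 1) → ℝ)) =>
      |u PQ.1 - u PQ.2| / (cyc d PQ.1 PQ.2) ^ α) '' (S ×ˢ S))) ∧
  (BddAbove ((fun P => |ut P|) '' S) ∧
    BddAbove ((fun PQ : (ℝ × (Fin (d + 1) → ℝ)) × (ℝ × (Fin (d + 1) → ℝ)) =>
      |ut PQ.1 - ut PQ.2| / (cyc d PQ.1 PQ.2) ^ α) '' (S ×ˢ S))) ∧
  (∀ i, BddAbove ((fun P => |ux i P|) '' S) ∧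
    BddAbove ((fun PQ : (ℝ × (Fin (d + 1) → ℝ)) × (ℝ × (Fin (d + 1) → ℝ)) =>
      |ux i PQ.1 - ux i PQ.2| / (cyc d PQ.1 PQ.2) ^ α) '' (S ×ˢ S))) ∧
  (∀ i j, BddAbove ((fun P => |P.2 (Fin.last d) * uxx i j P|) '' S) ∧
    BddAbove ((fun PQ : (ℝ × (Fin (d + 1) → ℝ)) × (ℝ × (Fin (d + 1) → ℝ)) =>
      |PQ.1.2 (Fin.last d) * uxx i j PQ.1 - PQ.2.2 (Fin.last d) * uxx i j PQ.2| /
        (cyc d PQ.1 PQ.2) ^ α) '' (S ×ˢ S)))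

/-- `ut`, `ux`, `uxx` really are the (one-sided, within the domain) time
derivative, first and second spatial partial derivatives of `u` on `[0,T] × H̄`. -/
def IsDerivs (d : ℕ) (T : ℝ) (u ut : ℝ × (Fin (d + 1) → ℝ) → ℝ)
    (ux : Fin (d + 1) → ℝ × (Fin (d + 1) → ℝ) → ℝ)
    (uxx : Fin (d + 1) → Fin (d + 1) → ℝ × (Fin (d + 1) → ℝ) → ℝ) : Prop :=
  (∀ P ∈ domT d T, HasDerivWithinAt (fun τ => u (τ, P.2)) (ut P) (Set.Icc 0 T) P.1) ∧
  (∀ P ∈ domT d T, ∀ i, HasDerivWithinAt (fun s => u (P.1, Function.update P.2 i s))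
      (ux i P) {s : ℝ | 0 ≤ Function.update P.2 i s (Fin.last d)} (P.2 i)) ∧
  (∀ P ∈ domT d T, ∀ i j, HasDerivWithinAt (fun s => ux i (P.1, Function.update P.2 j s))
      (uxx i j P) {s : ℝ | 0 ≤ Function.update P.2 j s (Fin.last d)} (P.2 j))

/-- `u` has (spatial) compact support in the closed Euclidean ball `B̄_R(x⁰)`. -/
def SuppBall (d : ℕ) (R : ℝ) (x0 : Fin (d + 1) → ℝ)
    (u : ℝ × (Fin (d + 1) → ℝ) → ℝ) : Prop :=
  ∀ P : ℝ × (Fin (d + 1) → ℝ), R < Real.sqrt (∑ i, (P.2 i - x0 i) ^ 2) → u P = 0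

/-! ### Auxiliary lemmas -/

lemma cyc_nonneg (d : ℕ) (P Q : ℝ × (Fin (d + 1) → ℝ)) : 0 ≤ cyc d P Q := by
  unfold cyc
  have h1 : (0:ℝ) ≤ ∑ i, |P.2 i - Q.2 i| := Finset.sum_nonneg fun i _ => abs_nonneg _
  positivity

lemma updMem (d : ℕ) (T : ℝ) (P : ℝ × (Fin (d + 1) → ℝ)) (hP : P ∈ domT d T)
    (j : Fin (d + 1)) (s : ℝ) (hs : P.2 j ≤ s) :
    (P.1, Function.update P.2 j s) ∈ domT d T := by
  refine ⟨hP.1, ?_⟩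
  by_cases hj : j = Fin.last d
  · subst hj; simpa using hP.2.trans hs
  · simpa [Function.update_of_ne (Ne.symm hj)] using hP.2

lemma cyc_bound (d : ℕ) (P : ℝ × (Fin (d + 1) → ℝ)) (hP : 0 ≤ P.2 (Fin.last d))
    (j : Fin (d + 1)) (c : ℝ) (hc : P.2 j < c) :
    0 < cyc d P (P.1, Function.update P.2 j c) ∧
      cyc d P (P.1, Function.update P.2 j c) ≤ Real.sqrt (c - P.2 j) := by
  set δ := c - P.2 j with hδ
  have hδpos : 0 < δ := by simp [hδ]; linarith
  have hnum : (∑ i, |P.2 i - Function.update P.2 j c i|) = δ := by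
    rw [Finset.sum_eq_single_of_mem j (Finset.mem_univ j)]
    · rw [Function.update_self]; rw [abs_sub_comm, abs_of_pos hδpos]
    · intro i _ hij; simp [Function.update_of_ne hij]
  have htime : Real.sqrt |P.1 - P.1| = 0 := by simp
  by_cases hj : j = Fin.last d
  · subst hj
    have hsum0 : (∑ i : Fin d, |P.2 i.castSucc - Function.update P.2 (Fin.last d) c i.castSucc|) = 0 := by
      apply Finset.sum_eq_zero; intro i _
      simp [Function.update_of_ne (Fin.castSucc_lt_last i).ne]
    have hcpos : 0 < c := lt_of_le_of_lt hP hc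
    have hQd : Function.update P.2 (Fin.last d) c (Fin.last d) = c := Function.update_self _ _ _
    have hden : Real.sqrt δ ≤ Real.sqrt (P.2 (Fin.last d)) + Real.sqrt c + Real.sqrt 0 := by
      have : Real.sqrt δ ≤ Real.sqrt c := Real.sqrt_le_sqrt (by simp [hδ]; linarith)
      have := Real.sqrt_nonneg (P.2 (Fin.last d))
      simp [Real.sqrt_zero]; linarith
    have hdpos : 0 < Real.sqrt (P.2 (Fin.last d)) + Real.sqrt c + Real.sqrt 0 := by
      have := Real.sqrt_pos.mpr hcpos
      have := Real.sqrt_nonneg (P.2 (Fin.last d)); simp [Real.sqrt_zero]; linarith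
    constructor
    · unfold cyc
      rw [show ((P.1, Function.update P.2 (Fin.last d) c).2) = Function.update P.2 (Fin.last d) c from rfl, hnum, htime, hsum0, hQd]
      have : 0 < δ / (Real.sqrt (P.2 (Fin.last d)) + Real.sqrt c + Real.sqrt 0) :=
        div_pos hδpos hdpos
      linarith
    · unfold cyc
      rw [show ((P.1, Function.update P.2 (Fin.last d) c).2) = Function.update P.2 (Fin.last d) c from rfl, hnum, htime, hsum0, hQd, add_zero]
      calc δ / (Real.sqrt (P.2 (Fin.last d)) + Real.sqrt c + Real.sqrt 0)
          ≤ δ / Real.sqrt δ := by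
            apply div_le_div_of_nonneg_left hδpos.le (Real.sqrt_pos.mpr hδpos) hden
        _ = Real.sqrt δ := Real.div_sqrt
  · obtain ⟨j', rfl⟩ : ∃ j' : Fin d, j'.castSucc = j := by
      rcases Fin.eq_castSucc_or_eq_last j with ⟨j', rfl⟩ | h
      · exact ⟨j', rfl⟩
      · exact absurd h hj
    have hQd : Function.update P.2 j'.castSucc c (Fin.last d) = P.2 (Fin.last d) := by
      rw [Function.update_of_ne (Ne.symm hj)]
    have hsum : (∑ i : Fin d, |P.2 i.castSucc - Function.update P.2 j'.castSucc c i.castSucc|) = δ := by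
      rw [Finset.sum_eq_single_of_mem j' (Finset.mem_univ j')]
      · rw [Function.update_self]; rw [abs_sub_comm, abs_of_pos hδpos]
      · intro i _ hij
        simp [Function.update_of_ne (fun h => hij (Fin.castSucc_injective d h))]
    have hden : Real.sqrt δ ≤ Real.sqrt (P.2 (Fin.last d)) + Real.sqrt (P.2 (Fin.last d)) + Real.sqrt δ := by
      have := Real.sqrt_nonneg (P.2 (Fin.last d)); linarith
    have hdpos : 0 < Real.sqrt (P.2 (Fin.last d)) + Real.sqrt (P.2 (Fin.last d)) + Real.sqrt δ := by
      have := Real.sqrt_pos.mpr hδpos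
      have := Real.sqrt_nonneg (P.2 (Fin.last d)); linarith
    constructor
    · unfold cyc
      rw [show ((P.1, Function.update P.2 j'.castSucc c).2) = Function.update P.2 j'.castSucc c from rfl, hnum, htime, hsum, hQd]
      have : 0 < δ / (Real.sqrt (P.2 (Fin.last d)) + Real.sqrt (P.2 (Fin.last d)) + Real.sqrt δ) :=
        div_pos hδpos hdpos
      linarith
    · unfold cyc
      rw [show ((P.1, Function.update P.2 j'.castSucc c).2) = Function.update P.2 j'.castSucc c from rfl, hnum, htime, hsum, hQd, add_zero]
      calc δ / (Real.sqrt (P.2 (Fin.last d)) + Real.sqrt (P.2 (Fin.last d)) + Real.sqrt δ)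
          ≤ δ / Real.sqrt δ := by
            apply div_le_div_of_nonneg_left hδpos.le (Real.sqrt_pos.mpr hδpos) hden
        _ = Real.sqrt δ := Real.div_sqrt

open Set in
lemma mvt_dir (d : ℕ) (T : ℝ) (g G : ℝ × (Fin (d + 1) → ℝ) → ℝ) (j : Fin (d + 1))
    (hder : ∀ Q ∈ domT d T, HasDerivWithinAt (fun s => g (Q.1, Function.update Q.2 j s))
      (G Q) {s : ℝ | 0 ≤ Function.update Q.2 j s (Fin.last d)} (Q.2 j))
    (P : ℝ × (Fin (d + 1) → ℝ)) (hP : P ∈ domT d T) (h : ℝ) (hh : 0 < h) :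
    ∃ c ∈ Set.Ioo (P.2 j) (P.2 j + h),
      G (P.1, Function.update P.2 j c) =
        (g (P.1, Function.update P.2 j (P.2 j + h)) - g P) / h := by
  set a := P.2 j with ha
  set φ : ℝ → ℝ := fun s => g (P.1, Function.update P.2 j s) with hφdef
  set ψ : ℝ → ℝ := fun s => G (P.1, Function.update P.2 j s) with hψdef
  set D : Set ℝ := {s : ℝ | 0 ≤ Function.update P.2 j s (Fin.last d)} with hD
  have hφ : ∀ s, a ≤ s → HasDerivWithinAt φ (ψ s) D s := by
    intro s hs
    have h1 := hder (P.1, Function.update P.2 j s) (updMem d T P hP j s hs)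
    simpa [Function.update_idem, hφdef, hψdef, hD] using h1
  have hsub : Set.Icc a (a + h) ⊆ D ∧ ∀ s ∈ Set.Ioo a (a + h), D ∈ nhds s := by
    by_cases hj : j = Fin.last d
    · subst hj
      have hDeq : D = Set.Ici (0:ℝ) := by ext s; simp [hD]
      have ha0 : 0 ≤ a := hP.2
      constructor
      · rw [hDeq]; intro s hs; exact le_trans ha0 hs.1
      · intro s hs; rw [hDeq]
        exact Ici_mem_nhds (lt_of_le_of_lt ha0 hs.1)
    · have hDeq : D = Set.univ := by
        ext s; simp [hD, Function.update_of_ne (Ne.symm hj)]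
        exact hP.2
      constructor
      · rw [hDeq]; exact subset_univ _
      · intro s _; rw [hDeq]; exact Filter.univ_mem
  have cont : ContinuousOn φ (Set.Icc a (a + h)) := by
    intro s hs
    exact ((hφ s hs.1).continuousWithinAt).mono hsub.1
  have hder' : ∀ s ∈ Set.Ioo a (a + h), HasDerivAt φ (ψ s) s := by
    intro s hs
    exact ((hφ s hs.1.le)).hasDerivAt (hsub.2 s hs)
  obtain ⟨c, hc, heq⟩ := exists_hasDerivAt_eq_slope φ ψ (by linarith) cont hder'
  refine ⟨c, hc, ?_⟩
  rw [show G (P.1, Function.update P.2 j c) = ψ c from rfl, heq]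
  congr 1
  · simp [hφdef, ha, Function.update_eq_self]
  · ring

lemma uDiff (d : ℕ) (P : ℝ × (Fin (d+1) → ℝ)) (hP : 0 ≤ P.2 (Fin.last d)) (j : Fin (d+1)) :
    UniqueDiffWithinAt ℝ {s : ℝ | 0 ≤ Function.update P.2 j s (Fin.last d)} (P.2 j) := by
  by_cases hj : j = Fin.last d
  · subst hj
    have : {s : ℝ | 0 ≤ Function.update P.2 (Fin.last d) s (Fin.last d)} = Set.Ici (0:ℝ) := by
      ext s; simp
    rw [this]
    exact uniqueDiffOn_Ici 0 _ hP
  · have : {s : ℝ | 0 ≤ Function.update P.2 j s (Fin.last d)} = Set.univ := by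
      ext s; simp [Function.update_of_ne (Ne.symm hj)]; exact hP
    rw [this]; exact uniqueDiffWithinAt_univ

lemma far_nhds (d : ℕ) (R : ℝ) (x0 : Fin (d + 1) → ℝ) (y : Fin (d+1) → ℝ)
    (j : Fin (d+1)) (hfar : R < Real.sqrt (∑ i, (y i - x0 i) ^ 2)) :
    {s : ℝ | R < Real.sqrt (∑ i, (Function.update y j s i - x0 i) ^ 2)} ∈ nhds (y j) := by
  have hcont : Continuous fun s : ℝ => Real.sqrt (∑ i, (Function.update y j s i - x0 i) ^ 2) := by
    apply Real.continuous_sqrt.comp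
    apply continuous_finset_sum
    intro i _
    by_cases hij : i = j
    · subst hij; simp [Function.update_self]; fun_prop
    · simp [Function.update_of_ne hij]; fun_prop
  have hopen : IsOpen {s : ℝ | R < Real.sqrt (∑ i, (Function.update y j s i - x0 i) ^ 2)} :=
    isOpen_Ioi.preimage hcont
  refine hopen.mem_nhds ?_
  simpa [Function.update_eq_self] using hfar

lemma ux_far (d : ℕ) (T R : ℝ) (x0 : Fin (d + 1) → ℝ)
    (u : ℝ × (Fin (d + 1) → ℝ) → ℝ) (ux : Fin (d + 1) → ℝ × (Fin (d + 1) → ℝ) → ℝ)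
    (hsupp : SuppBall d R x0 u)
    (hder1 : ∀ P ∈ domT d T, ∀ i, HasDerivWithinAt (fun s => u (P.1, Function.update P.2 i s))
      (ux i P) {s : ℝ | 0 ≤ Function.update P.2 i s (Fin.last d)} (P.2 i))
    (P : ℝ × (Fin (d+1) → ℝ)) (hP : P ∈ domT d T)
    (hfar : R < Real.sqrt (∑ i, (P.2 i - x0 i) ^ 2)) (i : Fin (d+1)) :
    ux i P = 0 := by
  have h1 := hder1 P hP i
  have hU := far_nhds d R x0 P.2 i hfar
  have h0 : HasDerivWithinAt (fun s => u (P.1, Function.update P.2 i s)) 0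
      {s : ℝ | 0 ≤ Function.update P.2 i s (Fin.last d)} (P.2 i) := by
    have hev : (fun s => u (P.1, Function.update P.2 i s)) =ᶠ[nhds (P.2 i)] (fun _ => (0:ℝ)) := by
      filter_upwards [hU] with s hs
      exact hsupp (P.1, Function.update P.2 i s) hs
    exact ((hasDerivAt_const (P.2 i) (0:ℝ)).congr_of_eventuallyEq hev).hasDerivWithinAt
  have h2 := h1.derivWithin (uDiff d P hP.2 i)
  rw [← h2, h0.derivWithin (uDiff d P hP.2 i)]

lemma uxx_far (d : ℕ) (T R : ℝ) (x0 : Fin (d + 1) → ℝ)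
    (u : ℝ × (Fin (d + 1) → ℝ) → ℝ) (ux : Fin (d + 1) → ℝ × (Fin (d + 1) → ℝ) → ℝ)
    (uxx : Fin (d + 1) → Fin (d + 1) → ℝ × (Fin (d + 1) → ℝ) → ℝ)
    (hsupp : SuppBall d R x0 u)
    (hder1 : ∀ P ∈ domT d T, ∀ i, HasDerivWithinAt (fun s => u (P.1, Function.update P.2 i s))
      (ux i P) {s : ℝ | 0 ≤ Function.update P.2 i s (Fin.last d)} (P.2 i))
    (hder2 : ∀ P ∈ domT d T, ∀ i j, HasDerivWithinAt (fun s => ux i (P.1, Function.update P.2 j s))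
      (uxx i j P) {s : ℝ | 0 ≤ Function.update P.2 j s (Fin.last d)} (P.2 j))
    (P : ℝ × (Fin (d+1) → ℝ)) (hP : P ∈ domT d T)
    (hfar : R < Real.sqrt (∑ i, (P.2 i - x0 i) ^ 2)) (i j : Fin (d+1)) :
    uxx i j P = 0 := by
  have h1 := hder2 P hP i j
  have hU := far_nhds d R x0 P.2 j hfar
  have h0 : HasDerivWithinAt (fun s => ux i (P.1, Function.update P.2 j s)) 0
      {s : ℝ | 0 ≤ Function.update P.2 j s (Fin.last d)} (P.2 j) := by
    have hev : (fun s => ux i (P.1, Function.update P.2 j s))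
        =ᶠ[nhdsWithin (P.2 j) {s : ℝ | 0 ≤ Function.update P.2 j s (Fin.last d)}]
        (fun _ => (0:ℝ)) := by
      filter_upwards [nhdsWithin_le_nhds hU, self_mem_nhdsWithin] with s hs hmem
      have hQ : (P.1, Function.update P.2 j s) ∈ domT d T := ⟨hP.1, hmem⟩
      exact ux_far d T R x0 u ux hsupp hder1 _ hQ hs i
    have hx : ux i (P.1, Function.update P.2 j (P.2 j)) = 0 := by
      rw [Function.update_eq_self]
      exact ux_far d T R x0 u ux hsupp hder1 P hP hfar i
    exact (hasDerivWithinAt_const (P.2 j) _ (0:ℝ)).congr_of_eventuallyEq hev (by simpa using hx)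
  have h2 := h1.derivWithin (uDiff d P hP.2 j)
  rw [← h2, h0.derivWithin (uDiff d P hP.2 j)]

lemma abs_le_supN (d : ℕ) (S : Set (ℝ × (Fin (d + 1) → ℝ)))
    (f : ℝ × (Fin (d + 1) → ℝ) → ℝ) (hb : BddAbove ((fun P => |f P|) '' S))
    {P : ℝ × (Fin (d + 1) → ℝ)} (hP : P ∈ S) : |f P| ≤ supN d S f :=
  le_csSup hb ⟨P, hP, rfl⟩

lemma supN_nonneg (d : ℕ) (S : Set (ℝ × (Fin (d + 1) → ℝ)))
    (f : ℝ × (Fin (d + 1) → ℝ) → ℝ) (hS : S.Nonempty)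
    (hb : BddAbove ((fun P => |f P|) '' S)) : 0 ≤ supN d S f := by
  obtain ⟨P, hP⟩ := hS
  exact (abs_nonneg _).trans (abs_le_supN d S f hb hP)

lemma sub_le_semiS (d : ℕ) (α : ℝ) (S : Set (ℝ × (Fin (d + 1) → ℝ)))
    (f : ℝ × (Fin (d + 1) → ℝ) → ℝ)
    (hb : BddAbove ((fun PQ : (ℝ × (Fin (d + 1) → ℝ)) × (ℝ × (Fin (d + 1) → ℝ)) =>
      |f PQ.1 - f PQ.2| / (cyc d PQ.1 PQ.2) ^ α) '' (S ×ˢ S)))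
    {P Q : ℝ × (Fin (d + 1) → ℝ)} (hP : P ∈ S) (hQ : Q ∈ S) (hc : 0 < cyc d P Q) :
    |f P - f Q| ≤ semiS d α S f * (cyc d P Q) ^ α := by
  have h1 : |f P - f Q| / (cyc d P Q) ^ α ≤ semiS d α S f :=
    le_csSup hb ⟨(P, Q), ⟨hP, hQ⟩, rfl⟩
  rwa [div_le_iff₀ (Real.rpow_pos_of_pos hc α)] at h1

lemma semiS_nonneg (d : ℕ) (α : ℝ) (S : Set (ℝ × (Fin (d + 1) → ℝ)))
    (f : ℝ × (Fin (d + 1) → ℝ) → ℝ) (hS : S.Nonempty)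
    (hb : BddAbove ((fun PQ : (ℝ × (Fin (d + 1) → ℝ)) × (ℝ × (Fin (d + 1) → ℝ)) =>
      |f PQ.1 - f PQ.2| / (cyc d PQ.1 PQ.2) ^ α) '' (S ×ˢ S))) :
    0 ≤ semiS d α S f := by
  obtain ⟨P, hP⟩ := hS
  have h0 : (0:ℝ) ≤ |f P - f P| / (cyc d P P) ^ α :=
    div_nonneg (abs_nonneg _) (Real.rpow_nonneg (cyc_nonneg d P P) α)
  exact h0.trans (le_csSup hb ⟨(P, P), ⟨hP, hP⟩, rfl⟩)

lemma holderS_nonneg (d : ℕ) (α : ℝ) (S : Set (ℝ × (Fin (d + 1) → ℝ)))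
    (f : ℝ × (Fin (d + 1) → ℝ) → ℝ) (hS : S.Nonempty)
    (hb1 : BddAbove ((fun P => |f P|) '' S))
    (hb2 : BddAbove ((fun PQ : (ℝ × (Fin (d + 1) → ℝ)) × (ℝ × (Fin (d + 1) → ℝ)) =>
      |f PQ.1 - f PQ.2| / (cyc d PQ.1 PQ.2) ^ α) '' (S ×ˢ S))) :
    0 ≤ holderS d α S f :=
  add_nonneg (supN_nonneg d S f hS hb1) (semiS_nonneg d α S f hS hb2)

set_option maxHeartbeats 1000000 in
/-- Interpolation inequality (iv): under the same hypotheses, for every `ε ∈ (0,1)`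
and all `1 ≤ i,j ≤ d`, `‖x_d u_{x_i x_j}‖_C ≤ ε ‖u‖_{C^{2+α}_s} + C ε^{-m} ‖u‖_C`,
with `m = m(d,α) > 0` and `C = C(T,R,d,α) > 0`. -/
theorem interpolation_weighted_second_deriv_sup (d : ℕ) (hd : 1 ≤ d) (α : ℝ)
    (hα : α ∈ Set.Ioo (0 : ℝ) 1) :
    ∃ m : ℝ, 0 < m ∧ ∀ T R : ℝ, 0 < T → 0 < R →
      ∃ C : ℝ, 0 < C ∧
        ∀ (u ut : ℝ × (Fin (d + 1) → ℝ) → ℝ)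
          (ux : Fin (d + 1) → ℝ × (Fin (d + 1) → ℝ) → ℝ)
          (uxx : Fin (d + 1) → Fin (d + 1) → ℝ × (Fin (d + 1) → ℝ) → ℝ)
          (x0 : Fin (d + 1) → ℝ),
          x0 (Fin.last d) = 0 →
          SuppBall d R x0 u →
          IsDerivs d T u ut ux uxx →
          FinNorm2 d α (domT d T) u ut ux uxx →
          ∀ ε ∈ Set.Ioo (0 : ℝ) 1, ∀ i j : Fin (d + 1),
            supN d (domT d T) (fun P => P.2 (Fin.last d) * uxx i j P) ≤
              ε * norm2S d α (domT d T) u ut ux uxx +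
                C * ε ^ (-m) * supN d (domT d T) u := by
  obtain ⟨hα0, hα1⟩ := hα
  set γ : ℝ := 1/α with hγdef
  have hγ0 : 0 < γ := by positivity
  set m : ℝ := 4*γ + 4*γ^2 with hmdef
  have hm0 : 0 < m := by positivity
  refine ⟨m, hm0, ?_⟩
  intro T R hT hR
  set K : ℝ := 4*(R+1) with hKdef
  have hK4 : 4 < K := by rw [hKdef]; linarith
  have hK0 : 0 < K := by linarith
  have hC0 : (0:ℝ) < 2*K*(2*K)^m := by positivity
  refine ⟨2*K*(2*K)^m, hC0, ?_⟩
  intro u ut ux uxx x0 hx0 hsupp hder hfin ε hε i j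
  obtain ⟨hε0, hε1⟩ := hε
  obtain ⟨⟨hbu, hbu'⟩, ⟨hbut, hbut'⟩, hbux, hbuxx⟩ := hfin
  have hder1 := hder.2.1
  have hder2 := hder.2.2
  set S := domT d T with hSdef
  have hSne : S.Nonempty := ⟨(0, fun _ => 0), ⟨⟨le_refl 0, hT.le⟩, le_refl 0⟩⟩
  set f : ℝ × (Fin (d+1) → ℝ) → ℝ := fun P => P.2 (Fin.last d) * uxx i j P with hfdef
  have hbf1 : BddAbove ((fun P => |f P|) '' S) := (hbuxx i j).1
  have hbf2 : BddAbove ((fun PQ : (ℝ × (Fin (d + 1) → ℝ)) × (ℝ × (Fin (d + 1) → ℝ)) =>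
      |f PQ.1 - f PQ.2| / (cyc d PQ.1 PQ.2) ^ α) '' (S ×ˢ S)) := (hbuxx i j).2
  -- nonnegativity facts
  have hMnn : 0 ≤ supN d S u := supN_nonneg d S u hSne hbu
  have hSfnn : 0 ≤ semiS d α S f := semiS_nonneg d α S f hSne hbf2
  have hSunn : 0 ≤ semiS d α S (ux i) := semiS_nonneg d α S (ux i) hSne (hbux i).2
  have hAnn : 0 ≤ supN d S (ux i) := supN_nonneg d S (ux i) hSne (hbux i).1
  -- norm lower bounds
  have hhu : 0 ≤ holderS d α S u := holderS_nonneg d α S u hSne hbu hbu'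
  have hhut : 0 ≤ holderS d α S ut := holderS_nonneg d α S ut hSne hbut hbut'
  have hhx : 0 ≤ ⨆ k, holderS d α S (ux k) :=
    Real.iSup_nonneg fun k => holderS_nonneg d α S (ux k) hSne (hbux k).1 (hbux k).2
  have hhxx : 0 ≤ ⨆ i', ⨆ j', holderS d α S (fun P => P.2 (Fin.last d) * uxx i' j' P) :=
    Real.iSup_nonneg fun i' => Real.iSup_nonneg fun j' =>
      holderS_nonneg d α S _ hSne (hbuxx i' j').1 (hbuxx i' j').2
  have hNnn : 0 ≤ norm2S d α S u ut ux uxx := by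
    unfold norm2S; linarith
  have hN3 : semiS d α S (ux i) ≤ norm2S d α S u ut ux uxx := by
    have h1 : semiS d α S (ux i) ≤ holderS d α S (ux i) := by
      have := supN_nonneg d S (ux i) hSne (hbux i).1
      unfold holderS; linarith
    have h2 : holderS d α S (ux i) ≤ ⨆ k, holderS d α S (ux k) :=
      le_ciSup (f := fun k => holderS d α S (ux k)) (Set.finite_range _).bddAbove i
    unfold norm2S; linarith
  have hN4 : semiS d α S f ≤ norm2S d α S u ut ux uxx := by
    have h1 : semiS d α S f ≤ holderS d α S f := by
      have := supN_nonneg d S f hSne hbf1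
      unfold holderS; linarith
    have h2 : holderS d α S f ≤ ⨆ j', holderS d α S (fun P => P.2 (Fin.last d) * uxx i j' P) :=
      le_ciSup (f := fun j' => holderS d α S (fun P => P.2 (Fin.last d) * uxx i j' P))
        (Set.finite_range _).bddAbove j
    have h3 : (⨆ j', holderS d α S (fun P => P.2 (Fin.last d) * uxx i j' P)) ≤
        ⨆ i', ⨆ j', holderS d α S (fun P => P.2 (Fin.last d) * uxx i' j' P) :=
      le_ciSup (f := fun i' => ⨆ j', holderS d α S (fun P => P.2 (Fin.last d) * uxx i' j' P))
        (Set.finite_range _).bddAbove i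
    unfold norm2S; linarith
  -- choice of step sizes
  have hε2 : (0:ℝ) < ε/2 := by linarith
  set η : ℝ := (ε/2) ^ γ with hηdef
  have hη0 : 0 < η := Real.rpow_pos_of_pos hε2 γ
  have hη1 : η ≤ 1 := Real.rpow_le_one (by linarith) (by linarith) hγ0.le
  have hηα : η ^ α = ε/2 := by
    rw [hηdef, ← Real.rpow_mul hε2.le, hγdef, one_div, inv_mul_cancel₀ hα0.ne', Real.rpow_one]
  have hbase0 : 0 < ε*η^2/(2*K) := by positivity
  set η' : ℝ := (ε*η^2/(2*K)) ^ γ with hη'def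
  have hη'0 : 0 < η' := Real.rpow_pos_of_pos hbase0 γ
  have hη'α : η' ^ α = ε*η^2/(2*K) := by
    rw [hη'def, ← Real.rpow_mul hbase0.le, hγdef, one_div, inv_mul_cancel₀ hα0.ne', Real.rpow_one]
  have hη2 : (0:ℝ) < η^2 := by positivity
  have hη'2 : (0:ℝ) < η'^2 := by positivity
  -- Step I: interpolation for first derivatives
  have stepI : ∀ P ∈ S, |ux i P| ≤ semiS d α S (ux i) * η'^α + 2 * supN d S u / η'^2 := by
    intro P hP
    obtain ⟨c, hc, heq⟩ := mvt_dir d T u (ux i) i (fun Q hQ => hder1 Q hQ i) P hP (η'^2) hη'2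
    have hQcS : (P.1, Function.update P.2 i c) ∈ S := updMem d T P hP i c hc.1.le
    have hQbS : (P.1, Function.update P.2 i (P.2 i + η'^2)) ∈ S :=
      updMem d T P hP i _ (by linarith)
    obtain ⟨hcyc0, hcycle⟩ := cyc_bound d P hP.2 i c hc.1
    have hcyc2 : cyc d P (P.1, Function.update P.2 i c) ≤ η' := by
      refine hcycle.trans ?_
      rw [show η' = Real.sqrt (η'^2) from (Real.sqrt_sq hη'0.le).symm]
      exact Real.sqrt_le_sqrt (by linarith [hc.2])
    have hterm1 : |ux i P - ux i (P.1, Function.update P.2 i c)| ≤ semiS d α S (ux i) * η'^α := by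
      have h1 := sub_le_semiS d α S (ux i) (hbux i).2 hP hQcS hcyc0
      have h2 : (cyc d P (P.1, Function.update P.2 i c))^α ≤ η'^α :=
        Real.rpow_le_rpow (cyc_nonneg d P _) hcyc2 hα0.le
      exact h1.trans (mul_le_mul_of_nonneg_left h2 hSunn)
    have hterm2 : |ux i (P.1, Function.update P.2 i c)| ≤ 2 * supN d S u / η'^2 := by
      rw [heq, abs_div, abs_of_pos hη'2]
      have h1 : |u (P.1, Function.update P.2 i (P.2 i + η'^2))| ≤ supN d S u :=
        abs_le_supN d S u hbu hQbS
      have h2 : |u P| ≤ supN d S u := abs_le_supN d S u hbu hP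
      have h3 : |u (P.1, Function.update P.2 i (P.2 i + η'^2)) - u P| ≤ 2 * supN d S u := by
        calc |u (P.1, Function.update P.2 i (P.2 i + η'^2)) - u P|
            ≤ |u (P.1, Function.update P.2 i (P.2 i + η'^2))| + |u P| := abs_sub _ _
          _ ≤ 2 * supN d S u := by linarith
      gcongr
    calc |ux i P| = |(ux i P - ux i (P.1, Function.update P.2 i c)) + ux i (P.1, Function.update P.2 i c)| := by ring_nf
      _ ≤ |ux i P - ux i (P.1, Function.update P.2 i c)| + |ux i (P.1, Function.update P.2 i c)| := abs_add_le _ _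
      _ ≤ semiS d α S (ux i) * η'^α + 2 * supN d S u / η'^2 := by linarith
  have hA : supN d S (ux i) ≤ semiS d α S (ux i) * η'^α + 2 * supN d S u / η'^2 := by
    apply csSup_le (hSne.image _)
    rintro y ⟨P, hP, rfl⟩
    exact stepI P hP
  -- Step II: interpolation for weighted second derivatives
  have stepII : ∀ P ∈ S,
      |f P| ≤ semiS d α S f * η^α + 2*(R+1) * supN d S (ux i) / η^2 := by
    intro P hP
    have hRHS0 : 0 ≤ semiS d α S f * η^α + 2*(R+1) * supN d S (ux i) / η^2 := by
      have : (0:ℝ) ≤ η^α := Real.rpow_nonneg hη0.le α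
      have h1 : 0 ≤ semiS d α S f * η^α := mul_nonneg hSfnn this
      have h2 : 0 ≤ 2*(R+1) * supN d S (ux i) / η^2 := by positivity
      linarith
    by_cases hfar : R < P.2 (Fin.last d)
    · have hdist : R < Real.sqrt (∑ k, (P.2 k - x0 k)^2) := by
        have h1 : (P.2 (Fin.last d) - x0 (Fin.last d))^2 ≤ ∑ k, (P.2 k - x0 k)^2 :=
          Finset.single_le_sum (f := fun k => (P.2 k - x0 k)^2)
            (fun k _ => sq_nonneg _) (Finset.mem_univ _)
        have h2 := Real.sqrt_le_sqrt h1
        rw [hx0, sub_zero, Real.sqrt_sq hP.2] at h2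
        linarith
      have huxx0 : uxx i j P = 0 :=
        uxx_far d T R x0 u ux uxx hsupp hder1 hder2 P hP hdist i j
      have hf0 : f P = 0 := by rw [hfdef]; simp [huxx0]
      rw [hf0, abs_zero]; exact hRHS0
    · push_neg at hfar
      obtain ⟨c, hc, heq⟩ := mvt_dir d T (ux i) (uxx i j) j (fun Q hQ => hder2 Q hQ i j) P hP (η^2) hη2
      have hQcS : (P.1, Function.update P.2 j c) ∈ S := updMem d T P hP j c hc.1.le
      have hQbS : (P.1, Function.update P.2 j (P.2 j + η^2)) ∈ S :=
        updMem d T P hP j _ (by linarith)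
      obtain ⟨hcyc0, hcycle⟩ := cyc_bound d P hP.2 j c hc.1
      have hcyc2 : cyc d P (P.1, Function.update P.2 j c) ≤ η := by
        refine hcycle.trans ?_
        rw [show η = Real.sqrt (η^2) from (Real.sqrt_sq hη0.le).symm]
        exact Real.sqrt_le_sqrt (by linarith [hc.2])
      have hterm1 : |f P - f (P.1, Function.update P.2 j c)| ≤ semiS d α S f * η^α := by
        have h1 := sub_le_semiS d α S f hbf2 hP hQcS hcyc0
        have h2 : (cyc d P (P.1, Function.update P.2 j c))^α ≤ η^α :=
          Real.rpow_le_rpow (cyc_nonneg d P _) hcyc2 hα0.le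
        exact h1.trans (mul_le_mul_of_nonneg_left h2 hSfnn)
      have hw : 0 ≤ Function.update P.2 j c (Fin.last d) ∧
          Function.update P.2 j c (Fin.last d) ≤ R + 1 := by
        have hη21 : η^2 ≤ 1 := by
          rw [pow_two]
          calc η*η ≤ 1*1 := mul_le_mul hη1 hη1 hη0.le one_pos.le
            _ = 1 := by ring
        by_cases hj : j = Fin.last d
        · subst hj; rw [Function.update_self]
          constructor
          · exact le_of_lt (lt_of_le_of_lt hP.2 hc.1)
          · have h9 := hc.2; linarith
        · rw [Function.update_of_ne (Ne.symm hj)]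
          exact ⟨hP.2, by linarith⟩
      have hterm2 : |f (P.1, Function.update P.2 j c)| ≤ 2*(R+1) * supN d S (ux i) / η^2 := by
        have hfQc : f (P.1, Function.update P.2 j c) =
            Function.update P.2 j c (Fin.last d) *
              ((ux i (P.1, Function.update P.2 j (P.2 j + η^2)) - ux i P)/η^2) := by
          rw [hfdef]
          show Function.update P.2 j c (Fin.last d) * uxx i j (P.1, Function.update P.2 j c) = _
          rw [heq]
        rw [hfQc, abs_mul, abs_div, abs_of_pos hη2, abs_of_nonneg hw.1]
        have h1 : |ux i (P.1, Function.update P.2 j (P.2 j + η^2))| ≤ supN d S (ux i) :=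
          abs_le_supN d S (ux i) (hbux i).1 hQbS
        have h2 : |ux i P| ≤ supN d S (ux i) := abs_le_supN d S (ux i) (hbux i).1 hP
        have h3 : |ux i (P.1, Function.update P.2 j (P.2 j + η^2)) - ux i P|
            ≤ 2 * supN d S (ux i) := by
          calc |ux i (P.1, Function.update P.2 j (P.2 j + η^2)) - ux i P|
              ≤ |ux i (P.1, Function.update P.2 j (P.2 j + η^2))| + |ux i P| := abs_sub _ _
            _ ≤ 2 * supN d S (ux i) := by linarith
        have h4 : |ux i (P.1, Function.update P.2 j (P.2 j + η^2)) - ux i P| / η^2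
            ≤ 2 * supN d S (ux i) / η^2 := by gcongr
        have h5 : 0 ≤ |ux i (P.1, Function.update P.2 j (P.2 j + η^2)) - ux i P| / η^2 := by
          positivity
        calc Function.update P.2 j c (Fin.last d) *
              (|ux i (P.1, Function.update P.2 j (P.2 j + η^2)) - ux i P| / η^2)
            ≤ (R+1) * (2 * supN d S (ux i) / η^2) := by
              apply mul_le_mul hw.2 h4 h5 (by linarith)
          _ = 2*(R+1) * supN d S (ux i) / η^2 := by ring
      calc |f P| = |(f P - f (P.1, Function.update P.2 j c)) + f (P.1, Function.update P.2 j c)| := by ring_nf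
        _ ≤ |f P - f (P.1, Function.update P.2 j c)| + |f (P.1, Function.update P.2 j c)| := abs_add_le _ _
        _ ≤ semiS d α S f * η^α + 2*(R+1) * supN d S (ux i) / η^2 := by linarith
  -- combine
  have hsup : supN d S f ≤ semiS d α S f * η^α +
      2*(R+1)/η^2 * (semiS d α S (ux i) * η'^α + 2 * supN d S u / η'^2) := by
    apply csSup_le (hSne.image _)
    rintro y ⟨P, hP, rfl⟩
    have h1 := stepII P hP
    have h2 : 2*(R+1) * supN d S (ux i) / η^2 ≤
        2*(R+1)/η^2 * (semiS d α S (ux i) * η'^α + 2 * supN d S u / η'^2) := by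
      have h3 : 0 < 2*(R+1)/η^2 := by positivity
      have h4 : 2*(R+1) * supN d S (ux i) / η^2 = 2*(R+1)/η^2 * supN d S (ux i) := by ring
      rw [h4]
      exact mul_le_mul_of_nonneg_left hA h3.le
    exact h1.trans (by linarith)
  have expand : semiS d α S f * η^α +
      2*(R+1)/η^2 * (semiS d α S (ux i) * η'^α + 2 * supN d S u / η'^2) =
      semiS d α S f * (ε/2) + semiS d α S (ux i) * (ε/4) +
        4*(R+1) * supN d S u / (η^2 * η'^2) := by
    rw [hηα, hη'α, hKdef]
    have hR1 : (R:ℝ) + 1 ≠ 0 := by positivity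
    field_simp
    ring
  -- lower bound for η^2 * η'^2
  set t : ℝ := ε/(2*K) with htdef
  have ht0 : 0 < t := by positivity
  have ht2 : t ≤ ε/2 := by
    rw [htdef]
    apply div_le_div_of_nonneg_left hε0.le two_pos (by linarith)
  have hu1 : t^γ ≤ η := by
    rw [hηdef]; exact Real.rpow_le_rpow ht0.le ht2 hγ0.le
  have hu1' : 0 < t^γ := Real.rpow_pos_of_pos ht0 γ
  have hbb : t^(1+(γ+γ)) ≤ ε*η^2/(2*K) := by
    have e1 : t^(1+(γ+γ)) = t * (t^γ * t^γ) := by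
      rw [Real.rpow_add ht0, Real.rpow_one, Real.rpow_add ht0]
    have e2 : ε*η^2/(2*K) = t * η^2 := by
      rw [htdef]; field_simp
    rw [e1, e2]
    have h5 : t^γ * t^γ ≤ η^2 := by
      rw [pow_two]; exact mul_le_mul hu1 hu1 hu1'.le hη0.le
    exact mul_le_mul_of_nonneg_left h5 ht0.le
  have hu2 : t^((1+(γ+γ))*γ) ≤ η' := by
    rw [hη'def, Real.rpow_mul ht0.le]
    exact Real.rpow_le_rpow (Real.rpow_nonneg ht0.le _) hbb hγ0.le
  have hu2' : 0 < t^((1+(γ+γ))*γ) := Real.rpow_pos_of_pos ht0 _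
  have hlow : t^m ≤ η^2 * η'^2 := by
    have e3 : t^m = (t^γ * t^γ) * (t^((1+(γ+γ))*γ) * t^((1+(γ+γ))*γ)) := by
      rw [← Real.rpow_add ht0, ← Real.rpow_add ht0, ← Real.rpow_add ht0]
      congr 1
      rw [hmdef]; ring
    rw [e3]
    have h6 : t^γ * t^γ ≤ η^2 := by
      rw [pow_two]; exact mul_le_mul hu1 hu1 hu1'.le hη0.le
    have h7 : t^((1+(γ+γ))*γ) * t^((1+(γ+γ))*γ) ≤ η'^2 := by
      rw [pow_two]; exact mul_le_mul hu2 hu2 hu2'.le hη'0.le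
    exact mul_le_mul h6 h7 (mul_nonneg hu2'.le hu2'.le) hη2.le
  have htm0 : 0 < t^m := Real.rpow_pos_of_pos ht0 m
  have hεm0 : 0 < ε^m := Real.rpow_pos_of_pos hε0 m
  have h2Km0 : 0 < (2*K)^m := Real.rpow_pos_of_pos (by linarith) m
  have hfinal : 4*(R+1) * supN d S u / (η^2 * η'^2) ≤ 2*K*(2*K)^m * ε^(-m) * supN d S u := by
    have h1 : 4*(R+1) * supN d S u / (η^2 * η'^2) ≤ 4*(R+1) * supN d S u / t^m :=
      div_le_div_of_nonneg_left (by positivity) htm0 hlow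
    have h2 : t^m = ε^m/(2*K)^m := by
      rw [htdef, Real.div_rpow hε0.le (by linarith : (0:ℝ) ≤ 2*K)]
    have h3 : ε^(-m) = (ε^m)⁻¹ := by rw [Real.rpow_neg hε0.le]
    rw [h3]
    rw [h2] at h1
    have h4 : 4*(R+1) * supN d S u / (ε^m/(2*K)^m) =
        4*(R+1) * (2*K)^m * (ε^m)⁻¹ * supN d S u := by
      field_simp
    rw [h4] at h1
    refine h1.trans ?_
    have h5 : 4*(R+1) ≤ 2*K := by rw [hKdef]; linarith
    have h6 : (0:ℝ) ≤ (2*K)^m * (ε^m)⁻¹ * supN d S u := by positivity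
    calc 4*(R+1) * (2*K)^m * (ε^m)⁻¹ * supN d S u
        = 4*(R+1) * ((2*K)^m * (ε^m)⁻¹ * supN d S u) := by ring
      _ ≤ 2*K * ((2*K)^m * (ε^m)⁻¹ * supN d S u) := mul_le_mul_of_nonneg_right h5 h6
      _ = 2*K*(2*K)^m * (ε^m)⁻¹ * supN d S u := by ring
  -- finish
  have b1 : semiS d α S f * (ε/2) ≤ norm2S d α S u ut ux uxx * (ε/2) :=
    mul_le_mul_of_nonneg_right hN4 (by linarith)
  have b2 : semiS d α S (ux i) * (ε/4) ≤ norm2S d α S u ut ux uxx * (ε/4) :=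
    mul_le_mul_of_nonneg_right hN3 (by linarith)
  have b3 : norm2S d α S u ut ux uxx * (ε/2) + norm2S d α S u ut ux uxx * (ε/4) ≤
      ε * norm2S d α S u ut ux uxx := by
    have h8 : 0 ≤ (ε/4) * norm2S d α S u ut ux uxx := mul_nonneg (by linarith) hNnn
    linarith
  calc supN d S f ≤ semiS d α S f * (ε/2) + semiS d α S (ux i) * (ε/4) +
        4*(R+1) * supN d S u / (η^2 * η'^2) := by rw [← expand]; exact hsup
    _ ≤ ε * norm2S d α S u ut ux uxx + 2*K*(2*K)^m * ε^(-m) * supN d S u := by linarith
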